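/- Let D^{p,q} be a double complex of right R-modules (with anti-commuting differentials d^h: D^{p,q} → D^{p+1,q} and d^v: D^{p,q} → D^{p,q+1}). If every column D^{p,*} is exact, then the left truncated totalisation ltTot D (whose degree-n term is the left truncated product over p of D^{p,n-p}, i.e. sequences (x_p) with x_p = 0 for p ≪ 0, with differential d^h + d^v) is acyclic. -/

import Mathlib

noncomputable section

namespace Novikov
variable (S : Type*) [Semiring S]
variable (D : ℤ → ℤ → Type*) [∀ p q, AddCommGroup (D p q)] [∀ p q, Module S (D p q)]

/-- Transport along equalities of the indices of a bigraded family of modules. -/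
def lcast (p p' q q' : ℤ) (h1 : p = p') (h2 : q = q') : D p q →ₗ[S] D p' q' := by
  subst h1; subst h2; exact LinearMap.id

variable (dh : ∀ p q, D p q →ₗ[S] D (p + 1) q) (dv : ∀ p q, D p q →ₗ[S] D p (q + 1))

/-- The component at `p` of the total differential `d = d^h + d^v`, mapping degree-`n`
elements of the totalisation (families `(x_p)_p` with `x_p ∈ D^{p, n-p}`) to degree `n+1`. -/
def totalD (n : ℤ) (x : ∀ p, D p (n - p)) (p : ℤ) : D p (n + 1 - p) :=
  lcast S D p p (n - p + 1) (n + 1 - p) rfl (by ring) (dv p (n - p) (x p)) +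
    lcast S D (p - 1 + 1) p (n - (p - 1)) (n + 1 - p) (by ring) (by ring)
      (dh (p - 1) (n - (p - 1)) (x (p - 1)))

end Novikov

namespace NovikovAux
open Novikov

variable {S : Type*} [Semiring S]
variable {D : ℤ → ℤ → Type*} [∀ p q, AddCommGroup (D p q)] [∀ p q, Module S (D p q)]

lemma lcast_self (p q : ℤ) (h1 : p = p) (h2 : q = q) (v : D p q) :
    lcast S D p p q q h1 h2 v = v := rfl

lemma lcast_lcast (p p' p'' q q' q'' : ℤ) (h1 h2 h1' h2') (v : D p q) :
    lcast S D p' p'' q' q'' h1' h2' (lcast S D p p' q q' h1 h2 v) =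
      lcast S D p p'' q q'' (h1.trans h1') (h2.trans h2') v := by
  subst h1; subst h2; subst h1'; subst h2'; rfl

lemma lcast_eq_zero (p p' q q' : ℤ) (h1 h2) (v : D p q) :
    lcast S D p p' q q' h1 h2 v = 0 ↔ v = 0 := by
  subst h1; subst h2; exact Iff.rfl

variable (dh : ∀ p q, D p q →ₗ[S] D (p + 1) q) (dv : ∀ p q, D p q →ₗ[S] D p (q + 1))

lemma dv_lcast (p p' q q' : ℤ) (h1 : p = p') (h2 : q = q') (v : D p q) :
    dv p' q' (lcast S D p p' q q' h1 h2 v) =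
      lcast S D p p' (q + 1) (q' + 1) h1 (by rw [h2]) (dv p q v) := by
  subst h1; subst h2; rfl

lemma dh_lcast (p p' q q' : ℤ) (h1 : p = p') (h2 : q = q') (v : D p q) :
    dh p' q' (lcast S D p p' q q' h1 h2 v) =
      lcast S D (p + 1) (p' + 1) q q' (by rw [h1]) h2 (dh p q v) := by
  subst h1; subst h2; rfl

/-- vertical differential reindexed by total degree -/
def Dv (m p : ℤ) : D p (m - p) →ₗ[S] D p (m + 1 - p) :=
  (lcast S D p p (m - p + 1) (m + 1 - p) rfl (by ring)).comp (dv p (m - p))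

/-- horizontal differential reindexed by total degree, from column `p-1` to column `p` -/
def Dh' (m p : ℤ) : D (p - 1) (m - (p - 1)) →ₗ[S] D p (m + 1 - p) :=
  (lcast S D (p - 1 + 1) p (m - (p - 1)) (m + 1 - p) (by ring) (by ring)).comp
    (dh (p - 1) (m - (p - 1)))

lemma totalD_eq (m : ℤ) (x : ∀ p, D p (m - p)) (p : ℤ) :
    totalD S D dh dv m x p = Dv dv m p (x p) + Dh' dh m p (x (p - 1)) := rfl

lemma Dv_lcast (m m' p : ℤ) (h : m = m') (h2) (v : D p (m - p)) :
    Dv dv m' p (lcast S D p p (m - p) (m' - p) rfl h2 v) =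
      lcast S D p p (m + 1 - p) (m' + 1 - p) rfl (by rw [h]) (Dv dv m p v) := by
  subst h; simp [lcast_self]

lemma Dh'_lcast (m m' p : ℤ) (h : m = m') (h2) (v : D (p - 1) (m - (p - 1))) :
    Dh' dh m' p (lcast S D (p - 1) (p - 1) (m - (p - 1)) (m' - (p - 1)) rfl h2 v) =
      lcast S D p p (m + 1 - p) (m' + 1 - p) rfl (by rw [h]) (Dh' dh m p v) := by
  subst h; simp [lcast_self]

lemma DvDv (hvv : ∀ p q (v : D p q), dv p (q + 1) (dv p q v) = 0)
    (m p : ℤ) (v : D p (m - p)) : Dv dv (m + 1) p (Dv dv m p v) = 0 := by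
  simp only [Dv, LinearMap.comp_apply, dv_lcast, lcast_lcast, hvv, map_zero]

lemma DhDh (hhh : ∀ p q (v : D p q), dh (p + 1) q (dh p q v) = 0)
    (m p : ℤ) (v : D (p - 1 - 1) (m - (p - 1 - 1))) :
    Dh' dh (m + 1) p (Dh' dh m (p - 1) v) = 0 := by
  simp only [Dh', LinearMap.comp_apply, dh_lcast, lcast_lcast, hhh, map_zero]

lemma anti (hanti : ∀ p q (v : D p q), dh p (q + 1) (dv p q v) = - dv (p + 1) q (dh p q v))
    (m p : ℤ) (w : D (p - 1) (m - (p - 1))) :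
    Dv dv (m + 1) p (Dh' dh m p w) = - Dh' dh (m + 1) p (Dv dv m (p - 1) w) := by
  simp only [Dv, Dh', LinearMap.comp_apply, dv_lcast, dh_lcast, lcast_lcast, hanti,
    map_neg, neg_neg]

lemma Dv_exact (hcol : ∀ p q (v : D p (q + 1)), dv p (q + 1) v = 0 → ∃ u : D p q, dv p q u = v)
    (m p : ℤ) (v : D p (m + 1 - p)) (hv : Dv dv (m + 1) p v = 0) :
    ∃ u : D p (m - p), Dv dv m p u = v := by
  have hv' : dv p (m + 1 - p) v = 0 := by
    simpa [Dv, LinearMap.comp_apply, lcast_eq_zero] using hv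
  obtain ⟨u, hu⟩ := hcol p (m - p)
    (lcast S D p p (m + 1 - p) (m - p + 1) rfl (by ring) v)
    (by rw [dv_lcast, hv', map_zero])
  refine ⟨u, ?_⟩
  simp only [Dv, LinearMap.comp_apply, hu, lcast_lcast, lcast_self]

end NovikovAux

open Novikov in
/-- Let `D^{p,q}` be a double complex of right `R`-modules (= left
`Rᵐᵒᵖ`-modules), with anticommuting differentials `d^h : D^{p,q} → D^{p+1,q}` and
`d^v : D^{p,q} → D^{p,q+1}`.  If every column `D^{p,*}` is exact, then the left truncated
totalisation `ltTot D` — whose degree-`n` term consists of the families `(x_p)_p` with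
`x_p ∈ D^{p,n-p}` and `x_p = 0` for `p ≪ 0`, with differential `d^h + d^v` — is acyclic:
every left-truncated cocycle is the boundary of a left-truncated element. -/
theorem ltTot_acyclic_of_exact_columns
    (R : Type*) [Ring R]
    (D : ℤ → ℤ → Type*) [∀ p q, AddCommGroup (D p q)] [∀ p q, Module Rᵐᵒᵖ (D p q)]
    (dh : ∀ p q, D p q →ₗ[Rᵐᵒᵖ] D (p + 1) q) (dv : ∀ p q, D p q →ₗ[Rᵐᵒᵖ] D p (q + 1))
    (hhh : ∀ p q (v : D p q), dh (p + 1) q (dh p q v) = 0)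
    (hvv : ∀ p q (v : D p q), dv p (q + 1) (dv p q v) = 0)
    (hanti : ∀ p q (v : D p q), dh p (q + 1) (dv p q v) = - dv (p + 1) q (dh p q v))
    (hcol : ∀ p q (v : D p (q + 1)), dv p (q + 1) v = 0 → ∃ u : D p q, dv p q u = v) :
    ∀ (n : ℤ) (x : ∀ p, D p (n - p)),
      (∃ k, ∀ p < k, x p = 0) →
      (∀ p, totalD Rᵐᵒᵖ D dh dv n x p = 0) →
      ∃ y : ∀ p, D p (n - 1 - p),
        (∃ k, ∀ p < k, y p = 0) ∧
        ∀ p, lcast Rᵐᵒᵖ D p p (n - 1 + 1 - p) (n - p) rfl (by ring)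
          (totalD Rᵐᵒᵖ D dh dv (n - 1) y p) = x p := by

  open NovikovAux in
  rintro n x ⟨k, hk⟩ hcoc
  classical
  -- reindex the cocycle `x` to total degree `(n-1)+1`
  set m := n - 1 with hm
  have hnm : n = m + 1 := by omega
  set X : ∀ p, D p (m + 1 - p) :=
    fun p => lcast Rᵐᵒᵖ D p p (n - p) (m + 1 - p) rfl (by omega) (x p) with hXdef
  have hX : ∀ p, Dv dv (m + 1) p (X p) = - Dh' dh (m + 1) p (X (p - 1)) := by
    intro p
    have h1 := hcoc p
    rw [totalD_eq] at h1
    have h2 : Dv dv n p (x p) = - Dh' dh n p (x (p - 1)) := by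
      rw [eq_neg_iff_add_eq_zero]; exact h1
    simp only [hXdef, Dv_lcast (h := hnm), Dh'_lcast (h := hnm), h2, map_neg]
  have hXzero : ∀ p < k, X p = 0 := by
    intro p hp; simp [hXdef, hk p hp, map_zero]
  -- the inductive construction
  set step : ∀ p : ℤ, D (p - 1) (m - (p - 1)) → D p (m - p) := fun p w =>
    if h : ∃ u : D p (m - p), Dv dv m p u = X p - Dh' dh m p w then h.choose else 0
    with hstepdef
  have hstep : ∀ (p : ℤ) (w : D (p - 1) (m - (p - 1))),
      (∃ u : D p (m - p), Dv dv m p u = X p - Dh' dh m p w) →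
      Dv dv m p (step p w) = X p - Dh' dh m p w := by
    intro p w h
    simp only [hstepdef, dif_pos h]
    exact h.choose_spec
  set g : ℕ → ∀ p : ℤ, D p (m - p) := fun j =>
    Nat.rec (fun _ => 0)
      (fun j gj p => if p = k + (j : ℤ) then step p (gj (p - 1)) else gj p) j
    with hgdef
  have hg0 : ∀ p, g 0 p = 0 := fun _ => rfl
  have hgs : ∀ (j : ℕ) (p : ℤ),
      g (j + 1) p = if p = k + (j : ℤ) then step p (g j (p - 1)) else g j p :=
    fun _ _ => rfl
  have hzero : ∀ (j : ℕ) (p : ℤ), p < k → g j p = 0 := by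
    intro j
    induction j with
    | zero => intro p _; exact hg0 p
    | succ j ih =>
      intro p hp
      rw [hgs, if_neg (by omega)]
      exact ih p hp
  have hC : ∀ (j : ℕ), ∀ p < k + (j : ℤ),
      Dv dv m p (g j p) = X p - Dh' dh m p (g j (p - 1)) := by
    intro j
    induction j with
    | zero =>
      intro p hp
      rw [hg0, hg0, hXzero p (by omega)]
      simp
    | succ j ih =>
      intro p hp
      rcases eq_or_lt_of_le (show p ≤ k + (j : ℤ) by push_cast at hp ⊢; omega) with he | hl
      · -- p = k + j : the new step
        have hne : p - 1 ≠ k + (j : ℤ) := by omega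
        rw [hgs, if_pos (by exact_mod_cast he), hgs, if_neg hne]
        apply hstep
        apply Dv_exact dv hcol
        rw [map_sub, hX p, anti dh dv hanti,
          ih (p - 1) (by omega)]
        rw [map_sub, DhDh dh hhh]
        abel
      · -- p < k + j : nothing changed
        have h1 : p ≠ k + (j : ℤ) := by omega
        have h2 : p - 1 ≠ k + (j : ℤ) := by omega
        rw [hgs, if_neg h1, hgs, if_neg h2]
        exact ih p hl
  have hmono : ∀ (j d : ℕ) (p : ℤ), p < k + (j : ℤ) → g (j + d) p = g j p := by
    intro j d
    induction d with
    | zero => intro p _; rfl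
    | succ d ih =>
      intro p hp
      have : (j + (d + 1)) = (j + d) + 1 := by omega
      rw [this, hgs, if_neg (by push_cast; omega)]
      exact ih p hp
  have hstab : ∀ (j j' : ℕ) (p : ℤ), p < k + (j : ℤ) → p < k + (j' : ℤ) →
      g j p = g j' p := by
    intro j j' p hj hj'
    rcases le_total j j' with h | h
    · obtain ⟨d, rfl⟩ := Nat.exists_eq_add_of_le h
      exact (hmono j d p hj).symm
    · obtain ⟨d, rfl⟩ := Nat.exists_eq_add_of_le h
      exact hmono j' d p hj'
  set y : ∀ p : ℤ, D p (m - p) := fun p => g (p - k + 1).toNat p with hydef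
  have hyb : ∀ p : ℤ, p < k + ((p - k + 1).toNat : ℤ) := by intro p; omega
  have hy : ∀ p, Dv dv m p (y p) = X p - Dh' dh m p (y (p - 1)) := by
    intro p
    have h1 := hC (p - k + 1).toNat p (hyb p)
    have h2 : g (p - k + 1).toNat (p - 1) = g (p - 1 - k + 1).toNat (p - 1) :=
      hstab _ _ _ (by omega) (hyb (p - 1))
    rw [hydef]
    rw [h1, h2]
  refine ⟨y, ⟨k, fun p hp => hzero _ p hp⟩, ?_⟩
  intro p
  have : totalD Rᵐᵒᵖ D dh dv m y p = X p := by
    rw [totalD_eq, hy p]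
    abel
  rw [this, hXdef]
  exact (NovikovAux.lcast_lcast p p p (n - p) (m + 1 - p) (n - p) rfl _ rfl _ (x p)).trans rfl
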